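/- Let ϵ ≥ 0 and let e = (1,…,1) ∈ ℝ^p. Let U ⊆ ℝ^p be a set satisfying Y⋄ ⊆ U ⊆ Y⋄ + ϵ·B, where B is the closed Euclidean unit ball of ℝ^p. Then WMin Y⋄ ⊆ U_ε ∩ Y⋄ ⊆ (Y⋄)_ε, where for a set Q ⊆ ℝ^p, Q_ε := {q ∈ Q : (q − ϵe − int ℝ₊^p) ∩ Q = ∅}. -/
import Mathlib


open Pointwise

/-- The set of weakly nondominated points of `Q ⊆ ℝ^p`. -/
def wMinSet {p : ℕ} (Q : Set (EuclideanSpace ℝ (Fin p))) : Set (EuclideanSpace ℝ (Fin p)) :=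
  {q ∈ Q | ¬ ∃ q' ∈ Q, ∀ j, q' j < q j}

/-- The set `Q_ε` of weakly ε-nondominated points of `Q`
(with `ε = ϵ·e`, `e = (1,…,1)`): `{q ∈ Q ∣ (q − ϵe − int ℝ₊^p) ∩ Q = ∅}`. -/
def wEpsSet {p : ℕ} (eps : ℝ) (Q : Set (EuclideanSpace ℝ (Fin p))) :
    Set (EuclideanSpace ℝ (Fin p)) :=
  {q ∈ Q | ¬ ∃ q' ∈ Q, ∀ j, q' j < q j - eps}


lemma coord_abs_le_norm {p : ℕ} (x : EuclideanSpace ℝ (Fin p)) (j : Fin p) : |x j| ≤ ‖x‖ := by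
  rw [EuclideanSpace.norm_eq]
  calc |x j| = Real.sqrt (x j ^ 2) := by rw [Real.sqrt_sq_eq_abs]
    _ ≤ _ := by
        apply Real.sqrt_le_sqrt
        simpa using Finset.single_le_sum (f := fun i => ‖x i‖ ^ 2) (fun i _ => sq_nonneg _)
          (Finset.mem_univ j)

theorem stmt_16 {n p : ℕ} (hn : 1 ≤ n) (hp : 2 ≤ p)
    (S : Set (EuclideanSpace ℝ (Fin n))) (hSne : S.Nonempty)
    (hSconv : Convex ℝ S) (hScomp : IsCompact S)
    (f : EuclideanSpace ℝ (Fin n) → EuclideanSpace ℝ (Fin p)) (hfcont : Continuous f)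
    (hfsqc : ∀ i, ∀ x1 ∈ S, ∀ x2 ∈ S, ∀ l : ℝ, 0 < l → l < 1 →
      f x1 i < f x2 i → f (l • x1 + (1 - l) • x2) i < f x2 i)
    (m M : EuclideanSpace ℝ (Fin p)) (hbox : ∀ x ∈ S, ∀ j, m j ≤ f x j ∧ f x j ≤ M j)
    (eps : ℝ) (heps : 0 ≤ eps)
    (U : Set (EuclideanSpace ℝ (Fin p)))
    -- `Y⋄ ⊆ U ⊆ Y⋄ + ϵ·B` with `B` the closed Euclidean unit ball
    (hU1 : ({y : EuclideanSpace ℝ (Fin p) | ∃ x ∈ S, ∀ j, f x j ≤ y j} ∩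
        {y : EuclideanSpace ℝ (Fin p) | ∀ j, y j ≤ M j}) ⊆ U)
    (hU2 : U ⊆ ({y : EuclideanSpace ℝ (Fin p) | ∃ x ∈ S, ∀ j, f x j ≤ y j} ∩
        {y : EuclideanSpace ℝ (Fin p) | ∀ j, y j ≤ M j}) + eps • Metric.closedBall (0 : EuclideanSpace ℝ (Fin p)) 1) :
    wMinSet ({y : EuclideanSpace ℝ (Fin p) | ∃ x ∈ S, ∀ j, f x j ≤ y j} ∩
        {y : EuclideanSpace ℝ (Fin p) | ∀ j, y j ≤ M j}) ⊆
      wEpsSet eps U ∩ ({y : EuclideanSpace ℝ (Fin p) | ∃ x ∈ S, ∀ j, f x j ≤ y j} ∩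
        {y : EuclideanSpace ℝ (Fin p) | ∀ j, y j ≤ M j}) ∧
    wEpsSet eps U ∩ ({y : EuclideanSpace ℝ (Fin p) | ∃ x ∈ S, ∀ j, f x j ≤ y j} ∩
        {y : EuclideanSpace ℝ (Fin p) | ∀ j, y j ≤ M j}) ⊆
      wEpsSet eps ({y : EuclideanSpace ℝ (Fin p) | ∃ x ∈ S, ∀ j, f x j ≤ y j} ∩
        {y : EuclideanSpace ℝ (Fin p) | ∀ j, y j ≤ M j}) := by

  set D := ({y : EuclideanSpace ℝ (Fin p) | ∃ x ∈ S, ∀ j, f x j ≤ y j} ∩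
        {y : EuclideanSpace ℝ (Fin p) | ∀ j, y j ≤ M j}) with hD
  constructor
  · rintro q ⟨hqD, hmin⟩
    refine ⟨⟨hU1 hqD, ?_⟩, hqD⟩
    rintro ⟨q', hq'U, hlt⟩
    obtain ⟨d, hd, b, hb, rfl⟩ := hU2 hq'U
    obtain ⟨c, hc, rfl⟩ := hb
    apply hmin
    refine ⟨d, hd, fun j => ?_⟩
    have hcj : |c j| ≤ 1 := le_trans (coord_abs_le_norm c j) (by simpa using hc)
    have h1 : d j = (d + eps • c) j - eps * c j := by
      simp
    have h2 : (d + eps • c) j < q j - eps := hlt j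
    have h3 : -(eps) ≤ eps * c j := by
      have := (abs_le.mp hcj).1
      nlinarith
    linarith
  · rintro q ⟨⟨hqU, hne⟩, hqD⟩
    refine ⟨hqD, ?_⟩
    rintro ⟨q', hq'D, hlt⟩
    exact hne ⟨q', hU1 hq'D, hlt⟩
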